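/- Let n_t ≤ q be positive integers, let 0 < β_1 < β_2 < ⋯ < β_q, let Ψ be the q×q Vandermonde matrix with (m,n) entry β_m^{n−1}, and define f(λ) = (1/n_t) Σ_{l=1}^q Σ_{k=q−n_t+1}^q λ^{n_t+k−q−1} e^{−λ/β_l} β_l^{q−n_t−1} (Ψ^{−1})_{k,l} / Γ(n_t−q+k) for λ > 0. Then for every nonnegative integer p, the function λ ↦ λ^p f(λ) is integrable on (0,∞) and ∫_0^∞ λ^p f(λ) dλ = (1/n_t) Σ_{k=q−n_t+1}^q [Γ(n_t+p+k−q)/Γ(n_t−q+k)] Σ_{l=1}^q (Ψ^{−1})_{k,l} β_l^{p+k−1}, where Γ is the real Gamma function. -/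

import Mathlib

open MeasureTheory Set

lemma key_int (n : ℕ) {b : ℝ} (hb : 0 < b) :
    IntegrableOn (fun t : ℝ => t ^ n * Real.exp (-t / b)) (Set.Ioi 0) volume ∧
    ∫ t in Set.Ioi (0:ℝ), t ^ n * Real.exp (-t / b)
      = Real.Gamma ((n : ℝ) + 1) * b ^ (n + 1) := by
  have hb' : 0 < (1 : ℝ) / b := by positivity
  have hn : (-1 : ℝ) < n := lt_of_lt_of_le neg_one_lt_zero (Nat.cast_nonneg n)
  constructor
  · have := integrableOn_rpow_mul_exp_neg_mul_rpow (p := 1) (s := (n : ℝ)) (b := 1 / b)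
      hn one_pos hb'
    refine this.congr_fun (fun t ht => ?_) measurableSet_Ioi
    dsimp only
    rw [Real.rpow_one, Real.rpow_natCast]
    ring_nf
  · have h := Real.integral_rpow_mul_exp_neg_mul_Ioi (a := (n : ℝ) + 1) (r := 1 / b)
      (by positivity) hb'
    rw [one_div_one_div] at h
    rw [show Real.Gamma ((n:ℝ)+1) * b^(n+1) = b ^ ((n:ℝ)+1) * Real.Gamma ((n:ℝ)+1) by
      rw [← Real.rpow_natCast b (n+1)]; push_cast; ring, ← h]
    refine setIntegral_congr_fun measurableSet_Ioi (fun t ht => ?_)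
    rw [add_sub_cancel_right, Real.rpow_natCast]
    congr 1
    field_simp

theorem stmt_10 (nt q : ℕ) (hnt : 1 ≤ nt) (hq : nt ≤ q)
    (β : Fin q → ℝ) (hβpos : ∀ i, 0 < β i)
    (hβmono : ∀ i j : Fin q, i < j → β i < β j)
    (Ψ : Matrix (Fin q) (Fin q) ℝ) (hΨ : Ψ = Matrix.of fun m n : Fin q => β m ^ (n : ℕ))
    (f : ℝ → ℝ)
    (hf : f = fun lam => (1 / (nt : ℝ)) * ∑ l : Fin q, ∑ k : Fin nt,
      lam ^ (nt + (q - nt + 1 + (k : ℕ)) - q - 1) * Real.exp (-lam / β l) *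
        β l ^ ((q : ℤ) - (nt : ℤ) - 1) *
        Ψ⁻¹ ⟨q - nt + (k : ℕ), by have := k.isLt; omega⟩ l /
        Real.Gamma ((nt : ℝ) - (q : ℝ) + ((q - nt + 1 + (k : ℕ) : ℕ) : ℝ))) :
    ∀ p : ℕ,
      IntegrableOn (fun lam => lam ^ p * f lam) (Set.Ioi 0) volume ∧
      ∫ lam in Set.Ioi (0 : ℝ), lam ^ p * f lam =
        (1 / (nt : ℝ)) * ∑ k : Fin nt,
          (Real.Gamma ((nt : ℝ) + (p : ℝ) + ((q - nt + 1 + (k : ℕ) : ℕ) : ℝ) - (q : ℝ)) /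
            Real.Gamma ((nt : ℝ) - (q : ℝ) + ((q - nt + 1 + (k : ℕ) : ℕ) : ℝ))) *
          ∑ l : Fin q,
            Ψ⁻¹ ⟨q - nt + (k : ℕ), by have := k.isLt; omega⟩ l *
              β l ^ (p + (q - nt + 1 + (k : ℕ)) - 1) := by
  intro p
  subst hf
  have hexp : ∀ k : Fin nt, nt + (q - nt + 1 + (k : ℕ)) - q - 1 = (k : ℕ) := fun k => by omega
  -- Gamma-argument casts
  have hB : ∀ k : Fin nt,
      (nt : ℝ) - (q : ℝ) + ((q - nt + 1 + (k : ℕ) : ℕ) : ℝ) = ((k : ℕ) : ℝ) + 1 := by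
    intro k
    push_cast [Nat.cast_sub hq]
    ring
  have hA : ∀ k : Fin nt,
      (nt : ℝ) + (p : ℝ) + ((q - nt + 1 + (k : ℕ) : ℕ) : ℝ) - (q : ℝ)
        = ((p + (k : ℕ) : ℕ) : ℝ) + 1 := by
    intro k
    push_cast [Nat.cast_sub hq]
    ring
  set C : Fin q → Fin nt → ℝ := fun l k =>
    β l ^ ((q : ℤ) - (nt : ℤ) - 1) *
      Ψ⁻¹ ⟨q - nt + (k : ℕ), by have := k.isLt; omega⟩ l /
      Real.Gamma (((k : ℕ) : ℝ) + 1) with hC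
  have hfun : (fun lam : ℝ => lam ^ p * ((1 / (nt : ℝ)) * ∑ l : Fin q, ∑ k : Fin nt,
        lam ^ (nt + (q - nt + 1 + (k : ℕ)) - q - 1) * Real.exp (-lam / β l) *
          β l ^ ((q : ℤ) - (nt : ℤ) - 1) *
          Ψ⁻¹ ⟨q - nt + (k : ℕ), by have := k.isLt; omega⟩ l /
          Real.Gamma ((nt : ℝ) - (q : ℝ) + ((q - nt + 1 + (k : ℕ) : ℕ) : ℝ))))
      = fun lam : ℝ => (1 / (nt : ℝ)) * ∑ l : Fin q, ∑ k : Fin nt,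
          C l k * (lam ^ (p + (k : ℕ)) * Real.exp (-lam / β l)) := by
    funext lam
    rw [mul_left_comm]
    congr 1
    rw [Finset.mul_sum]
    refine Finset.sum_congr rfl fun l _ => ?_
    rw [Finset.mul_sum]
    refine Finset.sum_congr rfl fun k _ => ?_
    rw [hexp k, hB k, hC, pow_add]
    ring
  rw [hfun]
  have hint : ∀ l : Fin q, Integrable
      (fun a : ℝ => ∑ k : Fin nt, C l k * (a ^ (p + (k : ℕ)) * Real.exp (-a / β l)))
      (volume.restrict (Set.Ioi 0)) :=
    fun l => integrable_finset_sum _ fun k _ => ((key_int _ (hβpos l)).1).const_mul _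
  constructor
  · exact (integrable_finset_sum _ fun l _ => hint l).const_mul _
  · rw [integral_const_mul]
    rw [integral_finset_sum _ fun l _ => hint l]
    have hval : ∀ l : Fin q, ∫ a in Set.Ioi (0:ℝ),
        ∑ k : Fin nt, C l k * (a ^ (p + (k : ℕ)) * Real.exp (-a / β l))
        = ∑ k : Fin nt, C l k *
            (Real.Gamma (((p + (k : ℕ) : ℕ) : ℝ) + 1) * β l ^ (p + (k : ℕ) + 1)) := by
      intro l
      rw [integral_finset_sum _ fun k _ => ((key_int _ (hβpos l)).1).const_mul _]
      exact Finset.sum_congr rfl fun k _ => by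
        rw [integral_const_mul, (key_int (p + (k : ℕ)) (hβpos l)).2]
    simp only [hval]
    congr 1
    rw [Finset.sum_comm]
    refine Finset.sum_congr rfl fun k _ => ?_
    rw [Finset.mul_sum]
    refine Finset.sum_congr rfl fun l _ => ?_
    rw [hA k, hB k]
    have hz : β l ^ ((q : ℤ) - (nt : ℤ) - 1) * β l ^ (p + (k : ℕ) + 1)
        = β l ^ (p + (q - nt + 1 + (k : ℕ)) - 1) := by
      rw [← zpow_natCast (β l) (p + (k : ℕ) + 1), ← zpow_add₀ (hβpos l).ne',
        ← zpow_natCast (β l) (p + (q - nt + 1 + (k : ℕ)) - 1)]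
      congr 1
      omega
    calc C l k * (Real.Gamma (((p + (k : ℕ) : ℕ) : ℝ) + 1) * β l ^ (p + (k : ℕ) + 1))
        = Real.Gamma (((p + (k : ℕ) : ℕ) : ℝ) + 1) / Real.Gamma (((k : ℕ) : ℝ) + 1) *
          (Ψ⁻¹ ⟨q - nt + (k : ℕ), by have := k.isLt; omega⟩ l *
            (β l ^ ((q : ℤ) - (nt : ℤ) - 1) * β l ^ (p + (k : ℕ) + 1))) := by
          simp only [hC]; ring
      _ = _ := by rw [hz]
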